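/- The 2-form ω on 𝔤₄ is nondegenerate; the operator P satisfies P∘P = Id and ω(PX,PY) = −ω(X,Y) for all X,Y; the (+1)-eigenspace of P is span{e₃,e₄,e₅} and the (−1)-eigenspace is span{e₁,e₂,e₆}; neither eigenspace is closed under the Lie bracket of 𝔤₄; and the bilinear form g(X,Y) = ω(X,PY) is symmetric, nondegenerate, and of signature (3,3) (some basis diagonalizes g with exactly three positive and three negative diagonal entries). -/

import Mathlib

noncomputable section

open LinearMap Module

abbrev V : Type := Fin 6 → ℝ

def e (i : Fin 6) : V := Pi.single i 1


section Helpers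
variable {α : Type*}
lemma vec6_val_0 (a0 a1 a2 a3 a4 a5 : α) : ![a0,a1,a2,a3,a4,a5] 0 = a0 := rfl
lemma vec6_val_1 (a0 a1 a2 a3 a4 a5 : α) : ![a0,a1,a2,a3,a4,a5] 1 = a1 := rfl
lemma vec6_val_2 (a0 a1 a2 a3 a4 a5 : α) : ![a0,a1,a2,a3,a4,a5] 2 = a2 := rfl
lemma vec6_val_3 (a0 a1 a2 a3 a4 a5 : α) : ![a0,a1,a2,a3,a4,a5] 3 = a3 := rfl
lemma vec6_val_4 (a0 a1 a2 a3 a4 a5 : α) : ![a0,a1,a2,a3,a4,a5] 4 = a4 := rfl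
lemma vec6_val_5 (a0 a1 a2 a3 a4 a5 : α) : ![a0,a1,a2,a3,a4,a5] 5 = a5 := rfl
end Helpers

lemma hsum (X : V) : X = ∑ i, X i • e i := by
  funext j
  simp [e, Fin.sum_univ_six, Pi.single_apply]

lemma hext2 (F G : V →ₗ[ℝ] V →ₗ[ℝ] ℝ) (h : ∀ i j, F (e i) (e j) = G (e i) (e j)) :
    ∀ X Y, F X Y = G X Y := by
  have : F = G := by
    apply (Pi.basisFun ℝ (Fin 6)).ext; intro i
    apply (Pi.basisFun ℝ (Fin 6)).ext; intro j
    have := h i j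
    simpa [e, Pi.basisFun_apply] using this
  rw [this]
  intro X Y; rfl

set_option maxHeartbeats 2000000 in
theorem stmt_16
    (a13 a14 a23 a24 a25 a46 : ℝ)
    (ha13 : a13 ≠ 0) (ha25 : a25 ≠ 0) (ha46 : a46 ≠ 0)
    (B : V →ₗ[ℝ] V →ₗ[ℝ] V)
    (hBanti : ∀ X Y, B X Y = - B Y X)
    (hB1 : B (e 0) (e 1) = e 3)
    (hB2 : B (e 1) (e 2) = e 4)
    (hB3 : B (e 0) (e 3) = e 5)
    (hB4 : B (e 2) (e 4) = e 5)
    (hBz : ∀ i j : Fin 6, i < j → (i, j) ∉ ({(0,1),(1,2),(0,3),(2,4)} : Set (Fin 6 × Fin 6)) → B (e i) (e j) = 0)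
    (ω : V →ₗ[ℝ] V →ₗ[ℝ] ℝ)
    (hωalt : ∀ X, ω X X = 0)
    (hω1 : ω (e 0) (e 2) = a13)
    (hω2 : ω (e 0) (e 3) = a14)
    (hω3 : ω (e 1) (e 2) = a23)
    (hω4 : ω (e 1) (e 3) = a24)
    (hω5 : ω (e 1) (e 4) = a25)
    (hω6 : ω (e 3) (e 5) = a46)
    (hωz : ∀ i j : Fin 6, i < j → (i, j) ∉ ({(0,2),(0,3),(1,2),(1,3),(1,4),(3,5)} : Set (Fin 6 × Fin 6)) → ω (e i) (e j) = 0)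
    (P : Module.End ℝ V)
    (hP1 : P (e 0) = -e 0)
    (hP2 : P (e 1) = -e 1)
    (hP3 : P (e 2) = e 2)
    (hP4 : P (e 3) = e 3)
    (hP5 : P (e 4) = e 4)
    (hP6 : P (e 5) = -e 5)
    (g : V →ₗ[ℝ] V →ₗ[ℝ] ℝ)
    (hg : ∀ X Y, g X Y = ω X (P Y))
    (Ep Em : Submodule ℝ V)
    (hEp : Ep = Submodule.span ℝ ({(e 2 : V), (e 3 : V), (e 4 : V)} : Set V))
    (hEm : Em = Submodule.span ℝ ({(e 0 : V), (e 1 : V), (e 5 : V)} : Set V)) :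
    (∀ X : V, (∀ Y, ω X Y = 0) → X = 0) ∧
    P ∘ₗ P = LinearMap.id ∧
    (∀ X Y, ω (P X) (P Y) = - ω X Y) ∧
    Module.End.eigenspace P 1 = Ep ∧
    Module.End.eigenspace P (-1) = Em ∧
    ¬ (∀ X ∈ Ep, ∀ Y ∈ Ep, B X Y ∈ Ep) ∧
    ¬ (∀ X ∈ Em, ∀ Y ∈ Em, B X Y ∈ Em) ∧
    (∀ X Y, g X Y = g Y X) ∧
    (∀ X : V, (∀ Y, g X Y = 0) → X = 0) ∧
    (∃ b : Basis (Fin 6) ℝ V,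
      (∀ i j, i ≠ j → g (b i) (b j) = 0) ∧
      Nat.card {i : Fin 6 // 0 < g (b i) (b i)} = 3 ∧
      Nat.card {i : Fin 6 // g (b i) (b i) < 0} = 3) := by
  classical
  have hωanti : ∀ X Y : V, ω X Y = - ω Y X := by
    intro X Y
    have h := hωalt (X + Y)
    simp only [map_add, LinearMap.add_apply, hωalt] at h
    linarith
  have w00 : ω (e 0) (e 0) = 0 := hωalt _
  have w01 : ω (e 0) (e 1) = 0 := hωz 0 1 (by decide) (by decide)
  have w02 : ω (e 0) (e 2) = a13 := hω1
  have w03 : ω (e 0) (e 3) = a14 := hω2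
  have w04 : ω (e 0) (e 4) = 0 := hωz 0 4 (by decide) (by decide)
  have w05 : ω (e 0) (e 5) = 0 := hωz 0 5 (by decide) (by decide)
  have w10 : ω (e 1) (e 0) = 0 := by rw [hωanti, w01, neg_zero]
  have w11 : ω (e 1) (e 1) = 0 := hωalt _
  have w12 : ω (e 1) (e 2) = a23 := hω3
  have w13 : ω (e 1) (e 3) = a24 := hω4
  have w14 : ω (e 1) (e 4) = a25 := hω5
  have w15 : ω (e 1) (e 5) = 0 := hωz 1 5 (by decide) (by decide)
  have w20 : ω (e 2) (e 0) = -a13 := by rw [hωanti, hω1]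
  have w21 : ω (e 2) (e 1) = -a23 := by rw [hωanti, hω3]
  have w22 : ω (e 2) (e 2) = 0 := hωalt _
  have w23 : ω (e 2) (e 3) = 0 := hωz 2 3 (by decide) (by decide)
  have w24 : ω (e 2) (e 4) = 0 := hωz 2 4 (by decide) (by decide)
  have w25 : ω (e 2) (e 5) = 0 := hωz 2 5 (by decide) (by decide)
  have w30 : ω (e 3) (e 0) = -a14 := by rw [hωanti, hω2]
  have w31 : ω (e 3) (e 1) = -a24 := by rw [hωanti, hω4]
  have w32 : ω (e 3) (e 2) = 0 := by rw [hωanti, w23, neg_zero]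
  have w33 : ω (e 3) (e 3) = 0 := hωalt _
  have w34 : ω (e 3) (e 4) = 0 := hωz 3 4 (by decide) (by decide)
  have w35 : ω (e 3) (e 5) = a46 := hω6
  have w40 : ω (e 4) (e 0) = 0 := by rw [hωanti, w04, neg_zero]
  have w41 : ω (e 4) (e 1) = -a25 := by rw [hωanti, hω5]
  have w42 : ω (e 4) (e 2) = 0 := by rw [hωanti, w24, neg_zero]
  have w43 : ω (e 4) (e 3) = 0 := by rw [hωanti, w34, neg_zero]
  have w44 : ω (e 4) (e 4) = 0 := hωalt _
  have w45 : ω (e 4) (e 5) = 0 := hωz 4 5 (by decide) (by decide)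
  have w50 : ω (e 5) (e 0) = 0 := by rw [hωanti, w05, neg_zero]
  have w51 : ω (e 5) (e 1) = 0 := by rw [hωanti, w15, neg_zero]
  have w52 : ω (e 5) (e 2) = 0 := by rw [hωanti, w25, neg_zero]
  have w53 : ω (e 5) (e 3) = -a46 := by rw [hωanti, hω6]
  have w54 : ω (e 5) (e 4) = 0 := by rw [hωanti, w45, neg_zero]
  have w55 : ω (e 5) (e 5) = 0 := hωalt _
  -- coordinate formula for P
  have hPX : ∀ X : V, P X = ![-X 0, -X 1, X 2, X 3, X 4, -X 5] := by
    intro X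
    conv_lhs => rw [hsum X]
    rw [Fin.sum_univ_six]
    simp only [map_add, map_smul, hP1, hP2, hP3, hP4, hP5, hP6]
    funext j
    fin_cases j <;>
      simp [e, Pi.single_apply, vec6_val_0, vec6_val_1, vec6_val_2, vec6_val_3, vec6_val_4,
        vec6_val_5]
  -- nondegeneracy of ω
  have hnd : ∀ X : V, (∀ Y, ω X Y = 0) → X = 0 := by
    intro X hX
    have key : ∀ j, ∑ i, X i * ω (e i) (e j) = 0 := by
      intro j
      have h0 : ω X (e j) = 0 := hX (e j)
      rw [hsum X] at h0
      simpa [LinearMap.sum_apply, map_smul, smul_eq_mul] using h0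
    have k0 := key 0
    have k1 := key 1
    have k2 := key 2
    have k3 := key 3
    have k4 := key 4
    have k5 := key 5
    simp only [Fin.sum_univ_six, w00, w01, w02, w03, w04, w05, w10, w11, w12, w13, w14, w15, w20, w21, w22, w23, w24, w25, w30, w31, w32, w33, w34, w35, w40, w41, w42, w43, w44, w45, w50, w51, w52, w53, w54, w55, mul_zero, add_zero, zero_add, mul_neg] at k0 k1 k2 k3 k4 k5
    have h3 : X 3 = 0 := by
      rcases mul_eq_zero.1 k5 with h | h
      · exact h
      · exact absurd h ha46
    have h1 : X 1 = 0 := by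
      rcases mul_eq_zero.1 k4 with h | h
      · exact h
      · exact absurd h ha25
    have h0 : X 0 = 0 := by
      rw [h1] at k2
      simp at k2
      rcases k2 with h | h
      · exact h
      · exact absurd h ha13
    have h5 : X 5 = 0 := by
      rw [h0, h1] at k3
      simp at k3
      rcases k3 with h | h
      · exact h
      · exact absurd h ha46
    have h2 : X 2 = 0 := by
      rw [h3] at k0
      simp at k0
      rcases k0 with h | h
      · exact h
      · exact absurd h ha13
    have h4 : X 4 = 0 := by
      rw [h2, h3] at k1
      simp at k1
      rcases k1 with h | h
      · exact h
      · exact absurd h ha25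
    funext i
    fin_cases i <;> simpa using (by assumption : _ = (0:ℝ))
  -- P ∘ P = id
  have hPP : P ∘ₗ P = LinearMap.id := by
    apply (Pi.basisFun ℝ (Fin 6)).ext
    intro i
    have hb : (Pi.basisFun ℝ (Fin 6)) i = e i := by simp [e, Pi.basisFun_apply]
    rw [hb]
    fin_cases i <;>
      simp [LinearMap.comp_apply, hP1, hP2, hP3, hP4, hP5, hP6, map_neg]
  have hPPa : ∀ X : V, P (P X) = X := by
    intro X
    have := LinearMap.congr_fun hPP X
    simpa using this
  -- ω (P X) (P Y) = - ω X Y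
  have hPω : ∀ X Y : V, ω (P X) (P Y) = - ω X Y := by
    have base : ∀ i j, (ω.compl₁₂ P P) (e i) (e j) = (-ω) (e i) (e j) := by
      intro i j
      fin_cases i <;> fin_cases j <;>
        simp [LinearMap.compl₁₂_apply, hP1, hP2, hP3, hP4, hP5, hP6, map_neg,
          w00, w01, w02, w03, w04, w05, w10, w11, w12, w13, w14, w15, w20, w21, w22, w23, w24, w25, w30, w31, w32, w33, w34, w35, w40, w41, w42, w43, w44, w45, w50, w51, w52, w53, w54, w55]
    intro X Y
    have := hext2 _ _ base X Y
    simpa [LinearMap.compl₁₂_apply] using this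
  -- eigenspaces
  have hmem1 : Module.End.eigenspace P 1 = Ep := by
    apply le_antisymm
    · intro X hX
      have hfix : P X = X := by
        have := (Module.End.mem_eigenspace_iff).1 hX
        simpa using this
      rw [hPX X] at hfix
      have h0 : X 0 = 0 := by have := congrFun hfix 0; simp [vec6_val_0] at this; linarith
      have h1 : X 1 = 0 := by have := congrFun hfix 1; simp [vec6_val_1] at this; linarith
      have h5 : X 5 = 0 := by have := congrFun hfix 5; simp [vec6_val_5] at this; linarith
      have hXdec : X = X 2 • e 2 + X 3 • e 3 + X 4 • e 4 := by
        funext j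
        fin_cases j <;> simp [e, Pi.single_apply, h0, h1, h5]
      rw [hEp, hXdec]
      refine add_mem (add_mem ?_ ?_) ?_ <;>
        exact Submodule.smul_mem _ _ (Submodule.subset_span (by simp))
    · rw [hEp]
      rw [Submodule.span_le]
      rintro x hx
      simp only [Set.mem_insert_iff, Set.mem_singleton_iff] at hx
      rcases hx with rfl | rfl | rfl <;>
        exact (Module.End.mem_eigenspace_iff).2 (by simp [hP3, hP4, hP5])
  have hmem2 : Module.End.eigenspace P (-1) = Em := by
    apply le_antisymm
    · intro X hX
      have hfix : P X = -X := by
        have := (Module.End.mem_eigenspace_iff).1 hX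
        simpa using this
      rw [hPX X] at hfix
      have h2 : X 2 = 0 := by have := congrFun hfix 2; simp [vec6_val_2] at this; linarith
      have h3 : X 3 = 0 := by have := congrFun hfix 3; simp [vec6_val_3] at this; linarith
      have h4 : X 4 = 0 := by have := congrFun hfix 4; simp [vec6_val_4] at this; linarith
      have hXdec : X = X 0 • e 0 + X 1 • e 1 + X 5 • e 5 := by
        funext j
        fin_cases j <;> simp [e, Pi.single_apply, h2, h3, h4]
      rw [hEm, hXdec]
      refine add_mem (add_mem ?_ ?_) ?_ <;>
        exact Submodule.smul_mem _ _ (Submodule.subset_span (by simp))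
    · rw [hEm]
      rw [Submodule.span_le]
      rintro x hx
      simp only [Set.mem_insert_iff, Set.mem_singleton_iff] at hx
      rcases hx with rfl | rfl | rfl <;>
        exact (Module.End.mem_eigenspace_iff).2 (by simp [hP1, hP2, hP6])
  -- Ep not closed
  have hEpnc : ¬ (∀ X ∈ Ep, ∀ Y ∈ Ep, B X Y ∈ Ep) := by
    intro hcl
    have h2 : (e 2 : V) ∈ Ep := by rw [hEp]; exact Submodule.subset_span (by simp)
    have h4 : (e 4 : V) ∈ Ep := by rw [hEp]; exact Submodule.subset_span (by simp)
    have h5 := hcl _ h2 _ h4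
    rw [hB4] at h5
    rw [hEp] at h5
    have hle : Submodule.span ℝ ({(e 2 : V), (e 3 : V), (e 4 : V)} : Set V) ≤
        LinearMap.ker (LinearMap.proj (R := ℝ) (φ := fun _ : Fin 6 => ℝ) 5) := by
      rw [Submodule.span_le]
      rintro x hx
      simp only [Set.mem_insert_iff, Set.mem_singleton_iff] at hx
      rcases hx with rfl | rfl | rfl <;>
        simp [LinearMap.mem_ker, e, Pi.single_apply]
    have := hle h5
    simp [LinearMap.mem_ker, e, Pi.single_apply] at this
  have hEmnc : ¬ (∀ X ∈ Em, ∀ Y ∈ Em, B X Y ∈ Em) := by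
    intro hcl
    have h0 : (e 0 : V) ∈ Em := by rw [hEm]; exact Submodule.subset_span (by simp)
    have h1 : (e 1 : V) ∈ Em := by rw [hEm]; exact Submodule.subset_span (by simp)
    have h3 := hcl _ h0 _ h1
    rw [hB1] at h3
    rw [hEm] at h3
    have hle : Submodule.span ℝ ({(e 0 : V), (e 1 : V), (e 5 : V)} : Set V) ≤
        LinearMap.ker (LinearMap.proj (R := ℝ) (φ := fun _ : Fin 6 => ℝ) 3) := by
      rw [Submodule.span_le]
      rintro x hx
      simp only [Set.mem_insert_iff, Set.mem_singleton_iff] at hx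
      rcases hx with rfl | rfl | rfl <;>
        simp [LinearMap.mem_ker, e, Pi.single_apply]
    have := hle h3
    simp [LinearMap.mem_ker, e, Pi.single_apply] at this
  -- symmetry of g
  have hgsymm : ∀ X Y, g X Y = g Y X := by
    have base : ∀ i j, (ω.compl₂ P) (e i) (e j) = (ω.compl₂ P).flip (e i) (e j) := by
      intro i j
      fin_cases i <;> fin_cases j <;>
        simp [LinearMap.compl₂_apply, LinearMap.flip_apply, hP1, hP2, hP3, hP4, hP5, hP6,
          map_neg, w00, w01, w02, w03, w04, w05, w10, w11, w12, w13, w14, w15, w20, w21, w22, w23, w24, w25, w30, w31, w32, w33, w34, w35, w40, w41, w42, w43, w44, w45, w50, w51, w52, w53, w54, w55]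
    intro X Y
    rw [hg, hg]
    have := hext2 _ _ base X Y
    simpa [LinearMap.compl₂_apply, LinearMap.flip_apply] using this
  -- nondegeneracy of g
  have hgnd : ∀ X : V, (∀ Y, g X Y = 0) → X = 0 := by
    intro X hX
    apply hnd
    intro Y
    have := hX (P Y)
    rw [hg, hPPa] at this
    exact this
  refine ⟨hnd, hPP, hPω, hmem1, hmem2, hEpnc, hEmnc, hgsymm, hgnd, ?_⟩
  -- orthogonal basis
  set c : ℝ := a24 - a14 * a23 / a13 with hcdef
  set f : Fin 6 → V :=
    ![e 0 + e 2, e 0 - e 2,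
      (e 1 - (a23/a13) • e 0) + e 4, (e 1 - (a23/a13) • e 0) - e 4,
      ((e 3 - (a14/a13) • e 2) - (c/a25) • e 4) + e 5,
      ((e 3 - (a14/a13) • e 2) - (c/a25) • e 4) - e 5] with hfdef
  set d : Fin 6 → ℝ := ![2*a13, -(2*a13), 2*a25, -(2*a25), -(2*a46), 2*a46] with hddef
  have hdiag : ∀ i, g (f i) (f i) = d i := by
    intro i
    rw [hg]
    fin_cases i <;>
      · simp only [Fin.reduceFinMk, hfdef, hddef, hcdef, vec6_val_0, vec6_val_1, vec6_val_2, vec6_val_3, vec6_val_4,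
          vec6_val_5, map_add, map_sub, map_smul, hP1, hP2, hP3, hP4, hP5, hP6, map_neg,
          LinearMap.add_apply, LinearMap.sub_apply, LinearMap.smul_apply, LinearMap.neg_apply,
          w00, w01, w02, w03, w04, w05, w10, w11, w12, w13, w14, w15, w20, w21, w22, w23, w24, w25, w30, w31, w32, w33, w34, w35, w40, w41, w42, w43, w44, w45, w50, w51, w52, w53, w54, w55, smul_eq_mul]
        try field_simp [ha13, ha25, ha46]
        try ring
  have hoff : ∀ i j, i ≠ j → g (f i) (f j) = 0 := by
    intro i j hij
    rw [hg]
    fin_cases i <;> fin_cases j <;>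
      first
      | exact absurd rfl hij
      | · simp only [Fin.reduceFinMk, hfdef, hddef, hcdef, vec6_val_0, vec6_val_1, vec6_val_2, vec6_val_3, vec6_val_4,
            vec6_val_5, map_add, map_sub, map_smul, hP1, hP2, hP3, hP4, hP5, hP6, map_neg,
            LinearMap.add_apply, LinearMap.sub_apply, LinearMap.smul_apply, LinearMap.neg_apply,
            w00, w01, w02, w03, w04, w05, w10, w11, w12, w13, w14, w15, w20, w21, w22, w23, w24, w25, w30, w31, w32, w33, w34, w35, w40, w41, w42, w43, w44, w45, w50, w51, w52, w53, w54, w55, smul_eq_mul]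
          try field_simp [ha13, ha25, ha46]
          try ring
  have hli : LinearIndependent ℝ f := by
    apply LinearMap.BilinForm.linearIndependent_of_iIsOrtho
      (LinearMap.BilinForm.iIsOrtho_def.2 (fun i j hij => hoff i j hij))
    intro i hi
    rw [hdiag] at hi
    fin_cases i <;>
      simp only [Fin.reduceFinMk, hddef, vec6_val_0, vec6_val_1, vec6_val_2, vec6_val_3, vec6_val_4,
        vec6_val_5] at hi <;>
      first
      | exact ha13 (by linarith)
      | exact ha25 (by linarith)
      | exact ha46 (by linarith)
  have hcard : Fintype.card (Fin 6) = Module.finrank ℝ V := by simp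
  let b : Basis (Fin 6) ℝ V := basisOfLinearIndependentOfCardEqFinrank hli hcard
  have hb : ⇑b = f := coe_basisOfLinearIndependentOfCardEqFinrank hli hcard
  have hbd : ∀ i, g (b i) (b i) = d i := by
    intro i
    rw [hb]
    exact hdiag i
  have count3 : ∀ (p : Fin 6 → Prop) (S : Finset (Fin 6)), (∀ i, p i ↔ i ∈ S) → S.card = 3 →
      Nat.card {i : Fin 6 // p i} = 3 := by
    intro p S h hS
    rw [Nat.card_congr (Equiv.subtypeEquivRight h), Nat.card_eq_finsetCard, hS]
  refine ⟨b, fun i j hij => by rw [hb]; exact hoff i j hij, ?_, ?_⟩ <;>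
    rcases lt_or_gt_of_ne ha13 with h13 | h13 <;>
    rcases lt_or_gt_of_ne ha25 with h25 | h25 <;>
    rcases lt_or_gt_of_ne ha46 with h46 | h46
  · exact count3 _ {1,3,4} (fun i => by rw [hbd]; fin_cases i <;> simp [hddef, vec6_val_0, vec6_val_1, vec6_val_2, vec6_val_3, vec6_val_4, vec6_val_5, not_lt] <;> linarith) (by decide)
  · exact count3 _ {1,3,5} (fun i => by rw [hbd]; fin_cases i <;> simp [hddef, vec6_val_0, vec6_val_1, vec6_val_2, vec6_val_3, vec6_val_4, vec6_val_5, not_lt] <;> linarith) (by decide)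
  · exact count3 _ {1,2,4} (fun i => by rw [hbd]; fin_cases i <;> simp [hddef, vec6_val_0, vec6_val_1, vec6_val_2, vec6_val_3, vec6_val_4, vec6_val_5, not_lt] <;> linarith) (by decide)
  · exact count3 _ {1,2,5} (fun i => by rw [hbd]; fin_cases i <;> simp [hddef, vec6_val_0, vec6_val_1, vec6_val_2, vec6_val_3, vec6_val_4, vec6_val_5, not_lt] <;> linarith) (by decide)
  · exact count3 _ {0,3,4} (fun i => by rw [hbd]; fin_cases i <;> simp [hddef, vec6_val_0, vec6_val_1, vec6_val_2, vec6_val_3, vec6_val_4, vec6_val_5, not_lt] <;> linarith) (by decide)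
  · exact count3 _ {0,3,5} (fun i => by rw [hbd]; fin_cases i <;> simp [hddef, vec6_val_0, vec6_val_1, vec6_val_2, vec6_val_3, vec6_val_4, vec6_val_5, not_lt] <;> linarith) (by decide)
  · exact count3 _ {0,2,4} (fun i => by rw [hbd]; fin_cases i <;> simp [hddef, vec6_val_0, vec6_val_1, vec6_val_2, vec6_val_3, vec6_val_4, vec6_val_5, not_lt] <;> linarith) (by decide)
  · exact count3 _ {0,2,5} (fun i => by rw [hbd]; fin_cases i <;> simp [hddef, vec6_val_0, vec6_val_1, vec6_val_2, vec6_val_3, vec6_val_4, vec6_val_5, not_lt] <;> linarith) (by decide)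
  · exact count3 _ {0,2,5} (fun i => by rw [hbd]; fin_cases i <;> simp [hddef, vec6_val_0, vec6_val_1, vec6_val_2, vec6_val_3, vec6_val_4, vec6_val_5, not_lt] <;> linarith) (by decide)
  · exact count3 _ {0,2,4} (fun i => by rw [hbd]; fin_cases i <;> simp [hddef, vec6_val_0, vec6_val_1, vec6_val_2, vec6_val_3, vec6_val_4, vec6_val_5, not_lt] <;> linarith) (by decide)
  · exact count3 _ {0,3,5} (fun i => by rw [hbd]; fin_cases i <;> simp [hddef, vec6_val_0, vec6_val_1, vec6_val_2, vec6_val_3, vec6_val_4, vec6_val_5, not_lt] <;> linarith) (by decide)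
  · exact count3 _ {0,3,4} (fun i => by rw [hbd]; fin_cases i <;> simp [hddef, vec6_val_0, vec6_val_1, vec6_val_2, vec6_val_3, vec6_val_4, vec6_val_5, not_lt] <;> linarith) (by decide)
  · exact count3 _ {1,2,5} (fun i => by rw [hbd]; fin_cases i <;> simp [hddef, vec6_val_0, vec6_val_1, vec6_val_2, vec6_val_3, vec6_val_4, vec6_val_5, not_lt] <;> linarith) (by decide)
  · exact count3 _ {1,2,4} (fun i => by rw [hbd]; fin_cases i <;> simp [hddef, vec6_val_0, vec6_val_1, vec6_val_2, vec6_val_3, vec6_val_4, vec6_val_5, not_lt] <;> linarith) (by decide)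
  · exact count3 _ {1,3,5} (fun i => by rw [hbd]; fin_cases i <;> simp [hddef, vec6_val_0, vec6_val_1, vec6_val_2, vec6_val_3, vec6_val_4, vec6_val_5, not_lt] <;> linarith) (by decide)
  · exact count3 _ {1,3,4} (fun i => by rw [hbd]; fin_cases i <;> simp [hddef, vec6_val_0, vec6_val_1, vec6_val_2, vec6_val_3, vec6_val_4, vec6_val_5, not_lt] <;> linarith) (by decide)
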